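/- Let k be a field of characteristic 2, G a finite group, L a G-Galois algebra over k, and s ∈ G an element with s² = 1 and s ≠ 1. Then Tr_{L/k}(x · (s • x)) = 0 for every x ∈ L. -/

import Mathlib

/-- A `G`-Galois algebra over `k`: a commutative `k`-algebra with an action of `G` by
`k`-algebra automorphisms, whose trace form is nondegenerate (étale), and admitting a
normal basis, i.e. an element `v` whose `G`-orbit `(g • v)_{g ∈ G}` is a `k`-basis. -/
def IsGaloisAlgebra (k G L : Type*) [Field k] [Group G] [Fintype G] [CommRing L]
    [Algebra k L] [MulSemiringAction G L] [SMulCommClass G k L] : Prop :=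
  LinearMap.BilinForm.Nondegenerate (Algebra.traceForm k L) ∧
    ∃ v : L, LinearIndependent k (fun g : G => g • v) ∧
      Submodule.span k (Set.range fun g : G => g • v) = ⊤

/-- Serre's condition (7.4.1): for a `G`-Galois algebra `L` over a field `k` of
characteristic 2 and an element `s ∈ G` of order 2, one has `Tr_{L/k}(x · s•x) = 0`
for all `x ∈ L`. -/
theorem stmt_14 (k G L : Type*) [Field k] [CharP k 2] [Group G] [Fintype G]
    [CommRing L] [Algebra k L] [MulSemiringAction G L] [SMulCommClass G k L]
    (hL : IsGaloisAlgebra k G L) (s : G) (hs : s ^ 2 = 1) (hs1 : s ≠ 1) (x : L) :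
    Algebra.trace k L (x * (s • x)) = 0 := by
  classical
  obtain ⟨-, v, hli, hspan⟩ := hL
  set b : Module.Basis G k L := Module.Basis.mk hli (by rw [hspan]) with hb
  have hbg : ∀ g : G, b g = g • v := fun g => Module.Basis.mk_apply hli _ g
  -- characteristic 2 in L
  have h2L : ∀ y : L, y + y = 0 := by
    intro y
    have h2 : (2 : k) = 0 := by
      have := CharP.cast_eq_zero k 2
      simpa using this
    calc y + y = (2 : k) • y := (two_smul k y).symm
      _ = 0 := by rw [h2, zero_smul]
  -- equivariance of repr
  have repr_smul : ∀ (u : G) (w : L) (g : G), b.repr (u • w) (u * g) = b.repr w g := by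
    intro u w g
    conv_lhs => rw [← b.sum_repr w]
    rw [Finset.smul_sum]
    have : ∀ i : G, u • (b.repr w i • b i) = b.repr w i • b (u * i) := by
      intro i
      rw [smul_comm, hbg, hbg, mul_smul]
    simp_rw [this]
    rw [map_sum, Finsupp.finset_sum_apply]
    simp_rw [map_smul, b.repr_self, Finsupp.smul_apply, Finsupp.single_apply,
      mul_right_inj]
    simp [Finsupp.single_apply]
  set z := x * (s • x) with hz
  have hsz : s • z = z := by
    have : s • (s • x) = x := by rw [← mul_smul, ← pow_two, hs, one_smul]
    rw [hz, smul_mul', this, mul_comm]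
  have hsinv : s⁻¹ = s := by
    have h1 : s * s = 1 := by rw [← pow_two]; exact hs
    exact inv_eq_of_mul_eq_one_right h1
  -- the sum over G of h⁻¹ • z vanishes
  have hsum : (∑ h : G, h⁻¹ • z) = 0 := by
    apply Finset.sum_ninvolution (fun a => s * a)
    · intro a
      have : (s * a)⁻¹ • z = a⁻¹ • z := by
        rw [mul_inv_rev, mul_smul, hsinv, hsz]
      rw [this]; exact h2L _
    · intro a _ h
      exact absurd (by simpa using congrArg (· * a⁻¹) h) hs1
    · intro a; exact Finset.mem_univ _
    · intro a; rw [← mul_assoc, ← pow_two, hs, one_mul]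
  -- trace formula
  rw [Algebra.trace_eq_matrix_trace b, Matrix.trace]
  have diag : ∀ h : G, Algebra.leftMulMatrix b z h h = b.repr ((h⁻¹ • z) * v) 1 := by
    intro h
    rw [Algebra.leftMulMatrix_eq_repr_mul]
    have : z * b h = h • ((h⁻¹ • z) * v) := by
      rw [smul_mul', smul_inv_smul, hbg]
    rw [this]
    have := repr_smul h ((h⁻¹ • z) * v) 1
    rw [mul_one] at this
    exact this
  simp_rw [Matrix.diag_apply, diag]
  rw [← Finsupp.finset_sum_apply, ← map_sum, ← Finset.sum_mul, hsum, zero_mul, map_zero]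
  rfl
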